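/- For any non-equality congruence ~ on the additive monoid of natural numbers with index m (the least natural number m such that m ~ x for some x ≠ m) and period q (the least q ≥ 1 with m ~ m+q), one has x ~ y if and only if either x = y < m, or both x, y ≥ m and x ≡ y (mod q). -/
import Mathlib


/-- For any non-equality congruence `c` on the additive monoid `ℕ`,
with index `m` (the least natural number related to some distinct element) and period `q`
(the least `q ≥ 1` with `m ∼ m + q`), one has `x ∼ y` iff either `x = y < m`, or
`x, y ≥ m` and `x ≡ y (mod q)`. -/
theorem frobenius_congruence_description
    (c : AddCon ℕ) (hne : ∃ x y : ℕ, x ≠ y ∧ c x y)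
    (m q : ℕ)
    (hm : ∃ x, x ≠ m ∧ c m x)
    (hm_min : ∀ m' : ℕ, (∃ x, x ≠ m' ∧ c m' x) → m ≤ m')
    (hq : 1 ≤ q) (hcq : c m (m + q))
    (hq_min : ∀ q' : ℕ, 1 ≤ q' → c m (m + q') → q ≤ q') :
    ∀ x y : ℕ, c x y ↔ ((x = y ∧ x < m) ∨ (m ≤ x ∧ m ≤ y ∧ x ≡ y [MOD q])) := by
  -- adding a constant preserves relatedness
  have addc : ∀ t a b : ℕ, c a b → c (a + t) (b + t) := by
    intro t a b h
    have := c.add h (c.refl t)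
    simpa using this
  have key1 : ∀ x, m ≤ x → c x (x + q) := by
    intro x hx
    have := addc (x - m) m (m + q) hcq
    rw [show m + (x - m) = x by omega, show m + q + (x - m) = x + q by omega] at this
    exact this
  have key2 : ∀ k x, m ≤ x → c x (x + k * q) := by
    intro k
    induction k with
    | zero => intro x hx; simpa using c.refl x
    | succ n ih =>
      intro x hx
      have h1 := ih x hx
      have h2 := key1 (x + n * q) (le_trans hx (Nat.le_add_right _ _))
      have := c.trans h1 h2
      rw [show x + n * q + q = x + (n + 1) * q by ring] at this
      exact this
  -- subtraction closure for the set of periods at m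
  have S_sub : ∀ d e : ℕ, d < e → c m (m + d) → c m (m + e) → c m (m + (e - d)) := by
    intro d e hde hd he
    have h1 := addc (e - d) m (m + d) hd
    rw [show m + d + (e - d) = m + e by omega] at h1
    exact c.trans he (c.symm h1)
  -- every period is divisible by q
  have S_div : ∀ d : ℕ, 1 ≤ d → c m (m + d) → q ∣ d := by
    intro d
    induction d using Nat.strong_induction_on with
    | _ d ih =>
      intro hd1 hd
      have hqd : q ≤ d := hq_min d hd1 hd
      rcases eq_or_lt_of_le hqd with h | h
      · exact h ▸ dvd_refl q
      · have hsub := S_sub q d h hcq hd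
        by_cases hdq : d - q = 0
        · omega
        · have h2 := ih (d - q) (by omega) (by omega) hsub
          have h3 : q ∣ (d - q) + q := Nat.dvd_add h2 dvd_rfl
          rwa [Nat.sub_add_cancel (by omega)] at h3
  -- a period at any x ≥ m is a period at m
  have main : ∀ x d : ℕ, m ≤ x → 1 ≤ d → c x (x + d) → q ∣ d := by
    intro x d hx hd h
    set a := x + 1 with ha
    have h1 : c m (m + a * q) := key2 a m le_rfl
    have hxa : x ≤ m + a * q := by
      have : a ≤ a * q := Nat.le_mul_of_pos_right a hq
      omega
    have h2 := addc (m + a * q - x) x (x + d) h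
    rw [show x + (m + a * q - x) = m + a * q by omega,
        show x + d + (m + a * q - x) = m + (a * q + d) by omega] at h2
    have h3 : c m (m + (a * q + d)) := c.trans h1 h2
    have haq : 1 ≤ a * q := Nat.mul_pos (by omega) hq
    have h4 := S_sub (a * q) (a * q + d) (by omega) h1 h3
    rw [show a * q + d - a * q = d by omega] at h4
    exact S_div d hd h4
  have geq : ∀ x y : ℕ, c x y → x ≠ y → m ≤ x := by
    intro x y h hne'
    exact hm_min x ⟨y, Ne.symm hne', h⟩
  intro x y
  constructor
  · intro h
    by_cases hxy : x = y
    · subst hxy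
      by_cases hxm : x < m
      · exact Or.inl ⟨rfl, hxm⟩
      · exact Or.inr ⟨by omega, by omega, Nat.ModEq.refl x⟩
    · have hx : m ≤ x := geq x y h hxy
      have hy : m ≤ y := geq y x (c.symm h) (Ne.symm hxy)
      refine Or.inr ⟨hx, hy, ?_⟩
      rcases lt_or_gt_of_ne hxy with hlt | hlt
      · have h' : c x (x + (y - x)) := by rwa [show x + (y - x) = y by omega]
        have := main x (y - x) hx (by omega) h'
        exact (Nat.modEq_iff_dvd' hlt.le).2 this
      · have h' : c y (y + (x - y)) := by
          rw [show y + (x - y) = x by omega]; exact c.symm h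
        have := main y (x - y) hy (by omega) h'
        exact ((Nat.modEq_iff_dvd' hlt.le).2 this).symm
  · rintro (⟨rfl, _⟩ | ⟨hx, hy, hmod⟩)
    · exact c.refl x
    · rcases le_total x y with hxy | hxy
      · obtain ⟨k, hk⟩ := (Nat.modEq_iff_dvd' hxy).1 hmod
        have := key2 k x hx
        rwa [show x + k * q = y by rw [mul_comm]; omega] at this
      · obtain ⟨k, hk⟩ := (Nat.modEq_iff_dvd' hxy).1 hmod.symm
        have := key2 k y hy
        rw [show y + k * q = x by rw [mul_comm]; omega] at this
        exact c.symm this
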